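/- arXiv:1501.06242 — 2 statements merged into one kernel-verified Lean document; each statement's English description precedes it below -/
import Mathlib

section
/- Let N ≥ 2 and for α ∈ (0,1) define c_{N,α} = (∫_{ℝ^N} (1 - cos z₁)/|z|^{N+2α} dz)^{-1}, where z = (z₁,…,z_N). Then lim_{α→1⁻} c_{N,α}/(1-α) = 4N/|S^{N-1}|, where |S^{N-1}| is the (N-1)-dimensional surface measure of the unit sphere in ℝ^N. -/
open MeasureTheory Metric Filter Real Set Topology

lemma integrable_norm_comp_iff {N : ℕ} (hN : 1 ≤ N) {f : ℝ → ℝ} (hf : Measurable f) :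
    Integrable (fun z : EuclideanSpace ℝ (Fin N) => f ‖z‖) ↔
      IntegrableOn (fun r : ℝ => r ^ (N - 1) * f r) (Ioi (0:ℝ)) := by
  set E := EuclideanSpace ℝ (Fin N)
  haveI : Nontrivial E := by
    have : 0 < Module.finrank ℝ E := by
      rw [finrank_euclideanSpace_fin]; omega
    exact Module.nontrivial_of_finrank_pos this
  set μ : Measure E := volume with hμ
  have ms : MeasurableSet ({(0:E)}ᶜ) := (measurableSet_singleton 0).compl
  have h1 : Integrable (fun z : E => f ‖z‖) μ ↔
      Integrable ((fun z : E => f ‖z‖) ∘ (Subtype.val : ({(0:E)}ᶜ : Set E) → E))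
        (μ.comap Subtype.val) := by
    rw [← (MeasurableEmbedding.subtype_coe ms).integrable_map_iff,
      map_comap_subtype_coe ms, MeasureTheory.restrict_compl_singleton]
  have h2 : Integrable ((fun z : E => f ‖z‖) ∘ (Subtype.val : ({(0:E)}ᶜ : Set E) → E))
        (μ.comap Subtype.val) ↔
      Integrable (f ∘ Subtype.val ∘ Prod.snd)
        (μ.toSphere.prod (Measure.volumeIoiPow (Module.finrank ℝ E - 1))) :=
    by
      have := μ.measurePreserving_homeomorphUnitSphereProd.integrable_comp_emb
        (Homeomorph.measurableEmbedding _) (g := f ∘ Subtype.val ∘ Prod.snd)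
      convert this using 2
      funext x
      simp [homeomorphUnitSphereProd, homeomorphSphereProd]
  rw [h1, h2, finrank_euclideanSpace_fin]
  set ν := Measure.volumeIoiPow (N - 1)
  have h3 : Integrable (f ∘ Subtype.val ∘ Prod.snd) (μ.toSphere.prod ν) ↔
      Integrable (fun r : Ioi (0:ℝ) => f r.1) ν := by
    have hmg : AEStronglyMeasurable (f ∘ Subtype.val ∘ Prod.snd) (μ.toSphere.prod ν) :=
      (hf.comp (measurable_subtype_coe.comp measurable_snd)).aestronglyMeasurable
    rw [integrable_prod_iff hmg]
    constructor
    · rintro ⟨hae, -⟩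
      have h0 : μ.toSphere ≠ 0 := by
        rw [← Measure.measure_univ_ne_zero, Measure.toSphere_apply_univ]
        refine mul_ne_zero (by simp [Module.finrank_pos.ne']) ?_
        exact (measure_ball_pos μ 0 one_pos).ne'
      haveI : (ae μ.toSphere).NeBot := ae_neBot.2 h0
      obtain ⟨x, hx⟩ := hae.exists
      exact hx
    · intro h
      refine ⟨Filter.Eventually.of_forall fun x => h, ?_⟩
      simpa using integrable_const (μ := μ.toSphere) (∫ y : Ioi (0:ℝ), ‖f y.1‖ ∂ν)
  rw [h3]
  have h4 : Integrable (fun r : Ioi (0:ℝ) => f r.1) ν ↔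
      Integrable (fun r : Ioi (0:ℝ) => f r.1 * (ENNReal.ofReal (r.1 ^ (N-1))).toReal)
        (Measure.comap Subtype.val volume) :=
    integrable_withDensity_iff ((measurable_subtype_coe.pow_const _).ennreal_ofReal)
      (Filter.Eventually.of_forall fun x => ENNReal.ofReal_lt_top)
  rw [h4]
  have h5 : (fun r : Ioi (0:ℝ) => f r.1 * (ENNReal.ofReal (r.1 ^ (N-1))).toReal) =
      (fun r : ℝ => r ^ (N - 1) * f r) ∘ (Subtype.val : Ioi (0:ℝ) → ℝ) := by
    funext r
    simp only [Function.comp_apply, ENNReal.toReal_ofReal (pow_nonneg (le_of_lt r.2) _)]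
    ring
  rw [h5, IntegrableOn, ← map_comap_subtype_coe measurableSet_Ioi,
    (MeasurableEmbedding.subtype_coe measurableSet_Ioi).integrable_map_iff]

lemma nontrivial_euc {N : ℕ} (hN : 1 ≤ N) : Nontrivial (EuclideanSpace ℝ (Fin N)) := by
  have : 0 < Module.finrank ℝ (EuclideanSpace ℝ (Fin N)) := by
    rw [finrank_euclideanSpace_fin]; omega
  exact Module.nontrivial_of_finrank_pos this

lemma indicator_prod_eq {N : ℕ} (s : ℝ) :
    (fun r : ℝ => r ^ (N - 1) * Set.indicator (Ioo (0:ℝ) 1) (fun r => r ^ s) r) =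
      Set.indicator (Ioo (0:ℝ) 1) (fun r => r ^ (N - 1) * r ^ s) := by
  funext r
  by_cases h : r ∈ Ioo (0:ℝ) 1 <;> simp [h]

lemma ae_eq_indicator_ball {N : ℕ} (hN : 1 ≤ N) (s : ℝ) :
    (fun z : EuclideanSpace ℝ (Fin N) =>
        Set.indicator (Ioo (0:ℝ) 1) (fun r => r ^ s) ‖z‖) =ᵐ[volume]
      Set.indicator (ball (0 : EuclideanSpace ℝ (Fin N)) 1) (fun z => ‖z‖ ^ s) := by
  haveI := nontrivial_euc hN
  have h0 : ∀ z : EuclideanSpace ℝ (Fin N), z ≠ 0 →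
      Set.indicator (Ioo (0:ℝ) 1) (fun r => r ^ s) ‖z‖ =
        Set.indicator (ball (0 : EuclideanSpace ℝ (Fin N)) 1) (fun z => ‖z‖ ^ s) z := by
    intro z hz
    by_cases hb : z ∈ ball (0 : EuclideanSpace ℝ (Fin N)) 1
    · have h1 : ‖z‖ ∈ Ioo (0:ℝ) 1 := ⟨norm_pos_iff.2 hz, mem_ball_zero_iff.1 hb⟩
      simp [Set.indicator_of_mem, h1, hb]
    · have h1 : ‖z‖ ∉ Ioo (0:ℝ) 1 := fun h => hb (mem_ball_zero_iff.2 h.2)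
      simp [Set.indicator_of_notMem, h1, hb]
  refine ae_iff.2 (measure_mono_null (fun z hz => ?_) (measure_singleton 0))
  simp only [mem_setOf_eq] at hz
  by_contra hz0
  exact hz (h0 z fun h => hz0 (by simp [h]))

lemma integrableOn_rpow_ball {N : ℕ} (hN : 1 ≤ N) {s : ℝ} (hs : -(N:ℝ) < s) :
    IntegrableOn (fun z : EuclideanSpace ℝ (Fin N) => ‖z‖ ^ s)
      (ball (0 : EuclideanSpace ℝ (Fin N)) 1) := by
  haveI := nontrivial_euc hN
  have hfm : Measurable (Set.indicator (Ioo (0:ℝ) 1) (fun r : ℝ => r ^ s)) :=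
    (measurable_id.pow_const _).indicator measurableSet_Ioo
  rw [← integrable_indicator_iff measurableSet_ball, ← integrable_congr (ae_eq_indicator_ball hN s),
    integrable_norm_comp_iff hN hfm, indicator_prod_eq s, IntegrableOn,
    integrable_indicator_iff measurableSet_Ioo, IntegrableOn,
    Measure.restrict_restrict measurableSet_Ioo,
    inter_eq_self_of_subset_left Ioo_subset_Ioi_self]
  have hr : (-1:ℝ) < ((N:ℝ) - 1) + s := by
    have : (1:ℝ) ≤ N := by exact_mod_cast hN
    linarith
  have hint : IntegrableOn (fun r : ℝ => r ^ (((N:ℝ) - 1) + s)) (Ioo (0:ℝ) 1) :=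
    ((intervalIntegral.intervalIntegrable_rpow' hr).1).mono_set Ioo_subset_Ioc_self
  refine hint.congr_fun (fun r hr' => ?_) measurableSet_Ioo
  rw [← Real.rpow_natCast r (N-1), ← Real.rpow_add hr'.1]
  congr 1
  push_cast [Nat.cast_sub hN]
  ring

lemma setIntegral_rpow_ball {N : ℕ} (hN : 1 ≤ N) {s : ℝ} (hs : -(N:ℝ) < s) :
    ∫ z : EuclideanSpace ℝ (Fin N) in ball (0 : EuclideanSpace ℝ (Fin N)) 1, ‖z‖ ^ s =
      (N:ℝ) * (volume (ball (0 : EuclideanSpace ℝ (Fin N)) 1)).toReal / ((N:ℝ) + s) := by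
  haveI := nontrivial_euc hN
  set f : ℝ → ℝ := Set.indicator (Ioo (0:ℝ) 1) (fun r : ℝ => r ^ s) with hf
  have step1 : ∫ z : EuclideanSpace ℝ (Fin N) in ball (0 : EuclideanSpace ℝ (Fin N)) 1, ‖z‖ ^ s
      = ∫ z : EuclideanSpace ℝ (Fin N), f ‖z‖ := by
    rw [← integral_indicator measurableSet_ball]
    exact (integral_congr_ae (ae_eq_indicator_ball hN s)).symm
  rw [step1, integral_fun_norm_addHaar volume f, finrank_euclideanSpace_fin]
  have step2 : ∫ y in Ioi (0:ℝ), y ^ (N - 1) • f y = 1 / ((N:ℝ) + s) := by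
    have : ∀ y : ℝ, y ^ (N - 1) • f y = Set.indicator (Ioo (0:ℝ) 1)
        (fun r => r ^ (N - 1) * r ^ s) y := by
      intro y
      rw [smul_eq_mul, ← indicator_prod_eq (N := N) s]
    simp only [this]
    rw [setIntegral_indicator measurableSet_Ioo,
      inter_eq_self_of_subset_right Ioo_subset_Ioi_self]
    have hr : (-1:ℝ) < ((N:ℝ) - 1) + s := by
      have : (1:ℝ) ≤ N := by exact_mod_cast hN
      linarith
    have hcongr : ∫ y in Ioo (0:ℝ) 1, y ^ (N - 1) * y ^ s
        = ∫ y in Ioo (0:ℝ) 1, y ^ (((N:ℝ) - 1) + s) := by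
      refine setIntegral_congr_fun measurableSet_Ioo (fun r hr' => ?_)
      rw [← Real.rpow_natCast r (N-1), ← Real.rpow_add hr'.1]
      congr 1
      push_cast [Nat.cast_sub hN]
      ring
    rw [hcongr, ← MeasureTheory.integral_Ioc_eq_integral_Ioo,
      ← intervalIntegral.integral_of_le zero_le_one, integral_rpow (Or.inl hr)]
    have h1 : ((N:ℝ) - 1) + s + 1 = (N:ℝ) + s := by ring
    have h2 : (N:ℝ) + s ≠ 0 := by
      have : (1:ℝ) ≤ N := by exact_mod_cast hN
      linarith
    rw [h1, Real.one_rpow, Real.zero_rpow h2, sub_zero]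
  rw [step2, nsmul_eq_mul, smul_eq_mul]
  simp only [measureReal_def]
  ring

lemma integrableOn_rpow_tail {N : ℕ} (hN : 1 ≤ N) :
    IntegrableOn (fun z : EuclideanSpace ℝ (Fin N) => ‖z‖ ^ (-(N:ℝ) - 1))
      (ball (0 : EuclideanSpace ℝ (Fin N)) 1)ᶜ := by
  haveI := nontrivial_euc hN
  set c : ℝ := -(N:ℝ) - 1 with hc
  set f : ℝ → ℝ := Set.indicator (Ici (1:ℝ)) (fun r : ℝ => r ^ c) with hf
  have hfm : Measurable f := (measurable_id.pow_const _).indicator measurableSet_Ici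
  have heq : (fun z : EuclideanSpace ℝ (Fin N) => f ‖z‖) =
      Set.indicator (ball (0 : EuclideanSpace ℝ (Fin N)) 1)ᶜ (fun z => ‖z‖ ^ c) := by
    funext z
    by_cases hb : z ∈ (ball (0 : EuclideanSpace ℝ (Fin N)) 1)ᶜ
    · have h1 : ‖z‖ ∈ Ici (1:ℝ) := not_lt.1 (fun h => hb (by simpa [mem_ball_zero_iff] using h))
      simp [f, Set.indicator_of_mem, h1, hb]
    · have h1 : ‖z‖ ∉ Ici (1:ℝ) := by
        simp only [mem_compl_iff, not_not] at hb
        exact fun h => (not_le.2 (mem_ball_zero_iff.1 hb)) h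
      simp [f, Set.indicator_of_notMem, h1, hb]
  rw [← integrable_indicator_iff measurableSet_ball.compl, ← heq,
    integrable_norm_comp_iff hN hfm]
  have hprod : (fun r : ℝ => r ^ (N - 1) * f r) =
      Set.indicator (Ici (1:ℝ)) (fun r => r ^ (N - 1) * r ^ c) := by
    funext r
    by_cases h : r ∈ Ici (1:ℝ) <;> simp [f, h]
  rw [hprod, IntegrableOn, integrable_indicator_iff measurableSet_Ici, IntegrableOn,
    Measure.restrict_restrict measurableSet_Ici,
    inter_eq_self_of_subset_left (show Ici (1:ℝ) ⊆ Ioi 0 from fun x hx => mem_Ioi.2 (lt_of_lt_of_le one_pos hx))]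
  have hbase : IntegrableOn (fun r : ℝ => r ^ (-2:ℝ)) (Ici (1:ℝ)) := by
    rw [integrableOn_Ici_iff_integrableOn_Ioi]
    exact integrableOn_Ioi_rpow_of_lt (by norm_num) one_pos
  refine hbase.congr_fun (fun r hr' => ?_) measurableSet_Ici
  have hr0 : (0:ℝ) < r := lt_of_lt_of_le one_pos hr'
  rw [← Real.rpow_natCast r (N-1), ← Real.rpow_add hr0]
  congr 1
  push_cast [Nat.cast_sub hN, hc]
  ring

lemma coord_sq_le_norm_sq {N : ℕ} (z : EuclideanSpace ℝ (Fin N)) (i : Fin N) :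
    (z i) ^ 2 ≤ ‖z‖ ^ 2 := by
  rw [EuclideanSpace.norm_eq, Real.sq_sqrt (Finset.sum_nonneg fun j _ => sq_nonneg _)]
  have := Finset.single_le_sum (f := fun j => ‖z j‖ ^ 2) (fun j _ => sq_nonneg _)
    (Finset.mem_univ i)
  simpa [Real.norm_eq_abs, sq_abs] using this

lemma sum_coord_sq {N : ℕ} (z : EuclideanSpace ℝ (Fin N)) :
    ∑ i, (z i) ^ 2 = ‖z‖ ^ 2 := by
  rw [EuclideanSpace.norm_eq, Real.sq_sqrt (Finset.sum_nonneg fun j _ => sq_nonneg _)]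
  refine Finset.sum_congr rfl fun j _ => ?_
  rw [Real.norm_eq_abs, sq_abs]

lemma integral_coord_sq_swap {N : ℕ} (i j : Fin N) (c : ℝ) :
    ∫ z : EuclideanSpace ℝ (Fin N),
        Set.indicator (ball (0 : EuclideanSpace ℝ (Fin N)) 1)
          (fun z => (z i) ^ 2 * ‖z‖ ^ c) z =
    ∫ z : EuclideanSpace ℝ (Fin N),
        Set.indicator (ball (0 : EuclideanSpace ℝ (Fin N)) 1)
          (fun z => (z j) ^ 2 * ‖z‖ ^ c) z := by
  set T := LinearIsometryEquiv.piLpCongrLeft 2 ℝ ℝ (Equiv.swap i j) with hT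
  have hTm : MeasurePreserving T volume volume := T.measurePreserving
  have hcomp := hTm.integral_comp T.toHomeomorph.measurableEmbedding
    (Set.indicator (ball (0 : EuclideanSpace ℝ (Fin N)) 1)
      (fun z => (z i) ^ 2 * ‖z‖ ^ c))
  rw [← hcomp]
  refine integral_congr_ae (Filter.Eventually.of_forall fun z => ?_)
  have h1 : ‖T z‖ = ‖z‖ := T.norm_map z
  have h2 : (T z) i = z j := by
    simp only [hT, LinearIsometryEquiv.piLpCongrLeft_apply, Equiv.piCongrLeft'_apply,
      Equiv.symm_swap]
    exact congrArg z (Equiv.swap_apply_left i j)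
  by_cases hb : z ∈ ball (0 : EuclideanSpace ℝ (Fin N)) 1
  · have hb' : T z ∈ ball (0 : EuclideanSpace ℝ (Fin N)) 1 := by
      rw [mem_ball_zero_iff, h1]; exact mem_ball_zero_iff.1 hb
    simp only [Set.indicator_of_mem hb', Set.indicator_of_mem hb, h1, h2]
  · have hb' : T z ∉ ball (0 : EuclideanSpace ℝ (Fin N)) 1 := by
      intro h
      exact hb (mem_ball_zero_iff.2 (h1 ▸ mem_ball_zero_iff.1 h))
    simp only [Set.indicator_of_notMem hb', Set.indicator_of_notMem hb]

lemma integrable_mainF {N : ℕ} (hN : 1 ≤ N) (i0 : Fin N) {c : ℝ} (hc : -(N:ℝ) < 2 + c) :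
    Integrable (Set.indicator (ball (0 : EuclideanSpace ℝ (Fin N)) 1)
      (fun z => (z i0) ^ 2 * ‖z‖ ^ c)) := by
  haveI := nontrivial_euc hN
  have hG : Integrable (Set.indicator (ball (0 : EuclideanSpace ℝ (Fin N)) 1)
      (fun z : EuclideanSpace ℝ (Fin N) => ‖z‖ ^ (2 + c))) :=
    (integrable_indicator_iff measurableSet_ball).2 (integrableOn_rpow_ball hN hc)
  have hcoord : Measurable (fun z : EuclideanSpace ℝ (Fin N) => z i0) := by fun_prop
  have hnorm : Measurable (fun z : EuclideanSpace ℝ (Fin N) => ‖z‖) := measurable_norm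
  have hFm : Measurable (Set.indicator (ball (0 : EuclideanSpace ℝ (Fin N)) 1)
      (fun z : EuclideanSpace ℝ (Fin N) => (z i0) ^ 2 * ‖z‖ ^ c)) :=
    ((hcoord.pow_const 2).mul (hnorm.pow_const c)).indicator measurableSet_ball
  refine hG.mono' hFm.aestronglyMeasurable (Filter.Eventually.of_forall fun z => ?_)
  by_cases hb : z ∈ ball (0 : EuclideanSpace ℝ (Fin N)) 1
  · rw [Set.indicator_of_mem hb, Set.indicator_of_mem hb, Real.norm_eq_abs,
      abs_of_nonneg (mul_nonneg (sq_nonneg _) (Real.rpow_nonneg (norm_nonneg _) _))]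
    by_cases hz : z = 0
    · subst hz
      simp only [norm_zero]
      have h1 : ((0 : EuclideanSpace ℝ (Fin N)) i0) = 0 := rfl
      rw [h1]
      have := Real.rpow_nonneg (le_refl (0:ℝ)) (2 + c)
      nlinarith [Real.rpow_nonneg (le_refl (0:ℝ)) c]
    · have h0 : (0:ℝ) < ‖z‖ := norm_pos_iff.2 hz
      calc (z i0) ^ 2 * ‖z‖ ^ c ≤ ‖z‖ ^ 2 * ‖z‖ ^ c :=
            mul_le_mul_of_nonneg_right (coord_sq_le_norm_sq z i0)
              (Real.rpow_nonneg (norm_nonneg _) _)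
        _ = ‖z‖ ^ ((2:ℝ) + c) := by
            rw [← Real.rpow_natCast ‖z‖ 2, ← Real.rpow_add h0]; norm_num
  · rw [Set.indicator_of_notMem hb, Set.indicator_of_notMem hb]
    simp

lemma key_symmetry {N : ℕ} (hN : 1 ≤ N) (i0 : Fin N) {c : ℝ} (hc : -(N:ℝ) < 2 + c) :
    (N:ℝ) * ∫ z : EuclideanSpace ℝ (Fin N),
        Set.indicator (ball (0 : EuclideanSpace ℝ (Fin N)) 1)
          (fun z => (z i0) ^ 2 * ‖z‖ ^ c) z =
      ∫ z : EuclideanSpace ℝ (Fin N) in ball (0 : EuclideanSpace ℝ (Fin N)) 1,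
        ‖z‖ ^ (2 + c) := by
  haveI := nontrivial_euc hN
  set B := ball (0 : EuclideanSpace ℝ (Fin N)) 1 with hB
  set F : Fin N → EuclideanSpace ℝ (Fin N) → ℝ :=
    fun i => Set.indicator B (fun z => (z i) ^ 2 * ‖z‖ ^ c) with hF
  have hFint : ∀ i : Fin N, Integrable (F i) := fun i => integrable_mainF hN i hc
  have hswap : ∀ i : Fin N, ∫ z, F i z = ∫ z, F i0 z := fun i =>
    integral_coord_sq_swap i i0 c
  have hsum : (N:ℝ) * ∫ z, F i0 z = ∑ i : Fin N, ∫ z, F i z := by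
    rw [Finset.sum_congr rfl (fun i _ => hswap i), Finset.sum_const, Finset.card_univ,
      Fintype.card_fin, nsmul_eq_mul]
  rw [hsum, ← integral_finset_sum Finset.univ (fun i _ => hFint i)]
  have hptsum : ∀ z : EuclideanSpace ℝ (Fin N),
      (∑ i : Fin N, F i z) = Set.indicator B (fun z => ‖z‖ ^ 2 * ‖z‖ ^ c) z := by
    intro z
    by_cases hb : z ∈ B
    · simp only [hF, Set.indicator_of_mem hb]
      rw [← Finset.sum_mul, sum_coord_sq]
    · simp [hF, Set.indicator_of_notMem hb]
  have hae : (fun z : EuclideanSpace ℝ (Fin N) =>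
        Set.indicator B (fun z => ‖z‖ ^ 2 * ‖z‖ ^ c) z) =ᵐ[volume]
      Set.indicator B (fun z : EuclideanSpace ℝ (Fin N) => ‖z‖ ^ ((2:ℝ) + c)) := by
    refine ae_iff.2 (measure_mono_null (fun z hz => ?_) (measure_singleton 0))
    simp only [mem_setOf_eq] at hz
    by_contra hz0
    have hz0' : z ≠ 0 := fun h => hz0 (by simp [h])
    apply hz
    by_cases hb : z ∈ B
    · rw [Set.indicator_of_mem hb, Set.indicator_of_mem hb, ← Real.rpow_natCast ‖z‖ 2,
        ← Real.rpow_add (norm_pos_iff.2 hz0')]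
      norm_num
    · rw [Set.indicator_of_notMem hb, Set.indicator_of_notMem hb]
  rw [integral_congr_ae (Filter.Eventually.of_forall hptsum), integral_congr_ae hae,
    integral_indicator measurableSet_ball]

lemma M_value {N : ℕ} (hN : 1 ≤ N) (i0 : Fin N) {c : ℝ} (hc : -(N:ℝ) < 2 + c) :
    ∫ z : EuclideanSpace ℝ (Fin N),
        Set.indicator (ball (0 : EuclideanSpace ℝ (Fin N)) 1)
          (fun z => (z i0) ^ 2 * ‖z‖ ^ c) z =
      (volume (ball (0 : EuclideanSpace ℝ (Fin N)) 1)).toReal / ((N:ℝ) + (2 + c)) := by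
  have h1 := key_symmetry hN i0 hc
  rw [setIntegral_rpow_ball hN hc] at h1
  have hN0 : (N:ℝ) ≠ 0 := by
    have : (1:ℝ) ≤ (N:ℝ) := by exact_mod_cast hN
    linarith
  apply mul_left_cancel₀ hN0
  rw [h1, mul_div_assoc]

lemma main_tendsto {N : ℕ} (hN : 2 ≤ N) (i0 : Fin N) :
    Tendsto
      (fun α : ℝ =>
        (∫ z : EuclideanSpace ℝ (Fin N),
            (1 - Real.cos (z i0)) / ‖z‖ ^ ((N : ℝ) + 2 * α))⁻¹ / (1 - α))
      (nhdsWithin 1 (Set.Iio 1))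
      (nhds (4 * (N : ℝ) /
        ((N : ℝ) * (volume (Metric.ball (0 : EuclideanSpace ℝ (Fin N)) 1)).toReal))) := by
  have hN1 : 1 ≤ N := by omega
  haveI := nontrivial_euc hN1
  have hNR : (1:ℝ) ≤ (N:ℝ) := by exact_mod_cast hN1
  set V := (volume (Metric.ball (0 : EuclideanSpace ℝ (Fin N)) 1)).toReal with hV
  have hV0 : 0 < V := ENNReal.toReal_pos (measure_ball_pos volume 0 one_pos).ne'
    measure_ball_lt_top.ne
  set I : ℝ → ℝ := fun α => ∫ z : EuclideanSpace ℝ (Fin N),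
    (1 - Real.cos (z i0)) / ‖z‖ ^ ((N : ℝ) + 2 * α) with hI
  set D : EuclideanSpace ℝ (Fin N) → ℝ := fun z =>
    Set.indicator (ball (0 : EuclideanSpace ℝ (Fin N)) 1) (fun z => ‖z‖ ^ ((2:ℝ) - N)) z +
      Set.indicator (ball (0 : EuclideanSpace ℝ (Fin N)) 1)ᶜ
        (fun z => 2 * ‖z‖ ^ (-(N:ℝ) - 1)) z with hD
  have hDint : Integrable D := by
    refine Integrable.add ?_ ?_
    · exact (integrable_indicator_iff measurableSet_ball).2
        (integrableOn_rpow_ball hN1 (by linarith))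
    · exact (integrable_indicator_iff measurableSet_ball.compl).2
        ((integrableOn_rpow_tail hN1).const_mul 2)
  set C := ∫ z, D z with hC
  have hest : ∀ α : ℝ, α ∈ Ioo (1/2 : ℝ) 1 → |I α - V / (4 * (1 - α))| ≤ C := by
    intro α hα
    set c : ℝ := -((N:ℝ) + 2 * α) with hc
    have hc2 : -(N:ℝ) < 2 + c := by rw [hc]; linarith [hα.2]
    set mainF : EuclideanSpace ℝ (Fin N) → ℝ :=
      Set.indicator (ball (0 : EuclideanSpace ℝ (Fin N)) 1)
        (fun z => (z i0) ^ 2 * ‖z‖ ^ c) with hmainF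
    have hmain : Integrable mainF := integrable_mainF hN1 i0 hc2
    set tot : EuclideanSpace ℝ (Fin N) → ℝ :=
      fun z => (1 - Real.cos (z i0)) / ‖z‖ ^ ((N : ℝ) + 2 * α) with htot
    have htoteq : ∀ z, tot z = (1 - Real.cos (z i0)) * ‖z‖ ^ c := by
      intro z
      rw [htot]
      simp only [hc, Real.rpow_neg (norm_nonneg z), div_eq_mul_inv]
    have hcoord : Measurable (fun z : EuclideanSpace ℝ (Fin N) => z i0) := by fun_prop
    have hnorm : Measurable (fun z : EuclideanSpace ℝ (Fin N) => ‖z‖) := measurable_norm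
    have htotm : Measurable tot :=
      (measurable_const.sub (Real.measurable_cos.comp hcoord)).div (hnorm.pow_const _)
    have hdiff : ∀ z, |tot z - mainF z / 2| ≤ D z := by
      intro z
      by_cases hb : z ∈ ball (0 : EuclideanSpace ℝ (Fin N)) 1
      · have hbc : z ∉ (ball (0 : EuclideanSpace ℝ (Fin N)) 1)ᶜ := fun h => h hb
        have hDz : D z = ‖z‖ ^ ((2:ℝ) - N) := by
          simp only [hD]
          rw [Set.indicator_of_mem hb, Set.indicator_of_notMem hbc, add_zero]
        rw [hDz]
        by_cases hz : z = 0
        · subst hz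
          have h1 : ((0 : EuclideanSpace ℝ (Fin N)) i0) = 0 := rfl
          have h2 : tot 0 = 0 := by rw [htoteq, h1]; simp
          have h3 : mainF 0 = 0 := by
            rw [hmainF, Set.indicator_of_mem hb, h1]; simp
          rw [h2, h3]
          simpa using Real.rpow_nonneg (norm_nonneg (0 : EuclideanSpace ℝ (Fin N))) ((2:ℝ) - N)
        · have h0 : (0:ℝ) < ‖z‖ := norm_pos_iff.2 hz
          have hz1 : ‖z‖ < 1 := mem_ball_zero_iff.1 hb
          have habs : |z i0| ≤ ‖z‖ := by
            have h := coord_sq_le_norm_sq z i0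
            calc |z i0| = Real.sqrt ((z i0)^2) := (Real.sqrt_sq_eq_abs (z i0)).symm
              _ ≤ Real.sqrt (‖z‖^2) := Real.sqrt_le_sqrt h
              _ = ‖z‖ := Real.sqrt_sq (norm_nonneg z)
          have heq1 : tot z - mainF z / 2 =
              (1 - Real.cos (z i0) - (z i0)^2/2) * ‖z‖ ^ c := by
            rw [htoteq, hmainF, Set.indicator_of_mem hb]
            ring
          rw [heq1, abs_mul, abs_of_nonneg (Real.rpow_nonneg (norm_nonneg z) c)]
          have hcb : |1 - Real.cos (z i0) - (z i0)^2/2| ≤ |z i0|^4 * (5/96) := by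
            have h1 : 1 - Real.cos (z i0) - (z i0)^2/2 =
                -(Real.cos (z i0) - (1 - (z i0)^2/2)) := by ring
            rw [h1, abs_neg]
            exact Real.cos_bound (le_trans habs hz1.le)
          calc |1 - Real.cos (z i0) - (z i0)^2/2| * ‖z‖ ^ c
              ≤ (|z i0|^4 * (5/96)) * ‖z‖ ^ c :=
                mul_le_mul_of_nonneg_right hcb (Real.rpow_nonneg (norm_nonneg z) c)
            _ ≤ (‖z‖^4 * 1) * ‖z‖ ^ c := by
                refine mul_le_mul_of_nonneg_right ?_ (Real.rpow_nonneg (norm_nonneg z) c)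
                exact mul_le_mul (pow_le_pow_left₀ (abs_nonneg _) habs 4) (by norm_num)
                  (by norm_num) (pow_nonneg (norm_nonneg z) 4)
            _ = ‖z‖ ^ ((4:ℝ) + c) := by
                rw [mul_one, ← Real.rpow_natCast ‖z‖ 4, ← Real.rpow_add h0]
                norm_num
            _ ≤ ‖z‖ ^ ((2:ℝ) - N) := by
                refine Real.rpow_le_rpow_of_exponent_ge h0 hz1.le ?_
                rw [hc]; linarith [hα.2]
      · have hbc : z ∈ (ball (0 : EuclideanSpace ℝ (Fin N)) 1)ᶜ := hb
        have h1z : (1:ℝ) ≤ ‖z‖ := by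
          by_contra h
          exact hb (mem_ball_zero_iff.2 (not_le.1 h))
        have hDz : D z = 2 * ‖z‖ ^ (-(N:ℝ) - 1) := by
          simp only [hD]
          rw [Set.indicator_of_notMem hb, Set.indicator_of_mem hbc, zero_add]
        have h3 : mainF z = 0 := by rw [hmainF, Set.indicator_of_notMem hb]
        rw [hDz, h3]
        have h4 : |tot z - 0/2| = |1 - Real.cos (z i0)| * ‖z‖ ^ c := by
          rw [zero_div, sub_zero, htoteq, abs_mul,
            abs_of_nonneg (Real.rpow_nonneg (norm_nonneg z) c)]
        rw [h4]
        have h5 : |1 - Real.cos (z i0)| ≤ 2 := by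
          rw [abs_le]
          constructor <;> nlinarith [Real.cos_le_one (z i0), Real.neg_one_le_cos (z i0)]
        calc |1 - Real.cos (z i0)| * ‖z‖ ^ c ≤ 2 * ‖z‖ ^ c :=
              mul_le_mul_of_nonneg_right h5 (Real.rpow_nonneg (norm_nonneg z) c)
          _ ≤ 2 * ‖z‖ ^ (-(N:ℝ) - 1) := by
              refine mul_le_mul_of_nonneg_left ?_ (by norm_num)
              refine Real.rpow_le_rpow_of_exponent_le h1z ?_
              rw [hc]; linarith [hα.1]
    have htotint : Integrable tot := by
      refine (hDint.add hmain.abs).mono' htotm.aestronglyMeasurable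
        (Filter.Eventually.of_forall fun z => ?_)
      have h1 : |tot z| ≤ |tot z - mainF z / 2| + |mainF z / 2| := by
        calc |tot z| = |(tot z - mainF z / 2) + mainF z / 2| := by ring_nf
          _ ≤ _ := abs_add_le _ _
      calc ‖tot z‖ = |tot z| := rfl
        _ ≤ |tot z - mainF z / 2| + |mainF z / 2| := h1
        _ ≤ D z + |mainF z| := add_le_add (hdiff z)
            (by rw [abs_div, abs_two]; exact div_le_self (abs_nonneg _) one_le_two)
    have hMval : ∫ z, mainF z = V / (2 - 2*α) := by
      rw [hmainF, M_value hN1 i0 hc2, ← hV]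
      congr 1
      rw [hc]; ring
    have hIα : I α = ∫ z, tot z := by simp only [hI, htot]
    have hIsub : I α - V/(4*(1-α)) = ∫ z, (tot z - mainF z / 2) := by
      rw [integral_sub htotint (hmain.div_const 2), hIα]
      have h6 : ∫ z, mainF z / 2 = V / (4*(1-α)) := by
        rw [integral_div, hMval, div_div]
        congr 1
        ring
      rw [h6]
    rw [hIsub]
    calc |∫ z, (tot z - mainF z / 2)| ≤ ∫ z, |tot z - mainF z / 2| := by
          simpa [Real.norm_eq_abs] using
            norm_integral_le_integral_norm (μ := volume) (fun z => tot z - mainF z / 2)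
      _ ≤ ∫ z, D z := integral_mono ((htotint.sub (hmain.div_const 2)).abs) hDint
            (fun z => hdiff z)
  have hto : Tendsto (fun α : ℝ => (1 - α) * C) (nhdsWithin 1 (Set.Iio 1)) (𝓝 0) := by
    have h1 : Tendsto (fun α : ℝ => (1 - α) * C) (𝓝 (1:ℝ)) (𝓝 ((1 - 1) * C)) :=
      Continuous.tendsto ((continuous_const.sub continuous_id).mul continuous_const) 1
    simp only [sub_self, zero_mul] at h1
    exact tendsto_nhdsWithin_of_tendsto_nhds h1
  have key : Tendsto (fun α : ℝ => (1 - α) * I α) (nhdsWithin 1 (Set.Iio 1)) (𝓝 (V/4)) := by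
    rw [tendsto_iff_dist_tendsto_zero]
    refine squeeze_zero' (Filter.Eventually.of_forall fun α => dist_nonneg) ?_ hto
    filter_upwards [Ioo_mem_nhdsLT_of_mem
      (show (1:ℝ) ∈ Ioc (1/2:ℝ) 1 from ⟨by norm_num, le_refl 1⟩)] with α hα
    have h1α : 0 < 1 - α := by linarith [hα.2]
    rw [Real.dist_eq]
    have heq2 : (1-α) * I α - V/4 = (1-α) * (I α - V/(4*(1-α))) := by
      field_simp
    rw [heq2, abs_mul, abs_of_pos h1α]
    exact mul_le_mul_of_nonneg_left (hest α hα) h1α.le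
  have hV4 : V/4 ≠ 0 := by positivity
  have hfin := key.inv₀ hV4
  have hfun : (fun α : ℝ => (I α)⁻¹ / (1 - α)) = fun α : ℝ => ((1 - α) * I α)⁻¹ := by
    funext α
    rw [mul_inv, div_eq_mul_inv, mul_comm]
  have hN0 : (N:ℝ) ≠ 0 := by linarith
  have htarget : (4 * (N:ℝ) / ((N:ℝ) * V)) = (V/4)⁻¹ := by
    rw [inv_div]
    field_simp
  rw [show (fun α : ℝ =>
      (∫ z : EuclideanSpace ℝ (Fin N),
          (1 - Real.cos (z i0)) / ‖z‖ ^ ((N : ℝ) + 2 * α))⁻¹ / (1 - α)) =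
      (fun α : ℝ => (I α)⁻¹ / (1 - α)) from rfl, hfun, htarget]
  exact hfin

theorem stmt3 (N : ℕ) (hN : 2 ≤ N) :
    Tendsto
      (fun α : ℝ =>
        (∫ z : EuclideanSpace ℝ (Fin N),
            (1 - Real.cos (z ⟨0, by omega⟩)) / ‖z‖ ^ ((N : ℝ) + 2 * α))⁻¹ / (1 - α))
      (nhdsWithin 1 (Set.Iio 1))
      (nhds (4 * (N : ℝ) /
        ((N : ℝ) * (volume (Metric.ball (0 : EuclideanSpace ℝ (Fin N)) 1)).toReal))) :=
  main_tendsto hN _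
end

section
/- Let N ≥ 2, α ∈ (0,1), and let a measurable function h : ℝ^N → [0,∞) satisfy h(x) ≥ c·ρ(x)^α·|x|^{-N}·∫_{B₁(e_N) ∩ B_{|x|/4}(0)} ρ(y)^α/|y + s e_N|^{N+2α} dy for all x ∈ B₁(e_N), where ρ(y) = dist(y, ∂B₁(e_N)), c > 0, and s ∈ (0,1). Then for each fixed x ∈ B₁(e_N), lim_{s→0⁺} ∫_{B₁(e_N) ∩ B_{|x|/4}(0)} ρ(y)^α/|y + s e_N|^{N+2α} dy = +∞. -/
open MeasureTheory Metric Filter Real Set Pointwise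

private lemma cone_est {E : Type*} [NormedAddCommGroup E] [InnerProductSpace ℝ E] (e y : E)
    (he : ‖e‖ = 1) (hcone : (3/4 : ℝ) * ‖y‖ < (inner ℝ y e : ℝ)) (hyh : ‖y‖ ≤ 1/2) :
    ‖y - e‖ ≤ 1 - ‖y‖/2 := by
  have hns := norm_sub_sq_real y e
  rw [he] at hns
  have hsq : ‖y - e‖ ^ 2 ≤ (1 - ‖y‖/2) ^ 2 := by
    nlinarith [norm_nonneg y]
  by_contra hab
  push_neg at hab
  nlinarith [norm_nonneg (y - e), norm_nonneg y]

theorem stmt12 (N : ℕ) (hN : 2 ≤ N) (α : ℝ) (hα : α ∈ Set.Ioo (0:ℝ) 1)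
    (eN : EuclideanSpace ℝ (Fin N)) (heN : eN = EuclideanSpace.single ⟨N - 1, by omega⟩ 1)
    (ρ : EuclideanSpace ℝ (Fin N) → ℝ)
    (hρ : ∀ y, ρ y = Metric.infDist y (Metric.sphere eN 1))
    (h : EuclideanSpace ℝ (Fin N) → ℝ) (hmeas : Measurable h) (hnonneg : ∀ y, 0 ≤ h y)
    (c : ℝ) (hc : 0 < c) (s₀ : ℝ) (hs₀ : s₀ ∈ Set.Ioo (0:ℝ) 1)
    (hh : ∀ x ∈ Metric.ball eN 1,
      c * ρ x ^ α * ‖x‖ ^ (-(N : ℝ)) *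
        ∫ y in Metric.ball eN 1 ∩ Metric.ball (0 : EuclideanSpace ℝ (Fin N)) (‖x‖ / 4),
          ρ y ^ α / ‖y + s₀ • eN‖ ^ ((N : ℝ) + 2 * α) ≤ h x)
    (x : EuclideanSpace ℝ (Fin N)) (hx : x ∈ Metric.ball eN 1) :
    Tendsto
      (fun s : ℝ =>
        ∫ y in Metric.ball eN 1 ∩ Metric.ball (0 : EuclideanSpace ℝ (Fin N)) (‖x‖ / 4),
          ρ y ^ α / ‖y + s • eN‖ ^ ((N : ℝ) + 2 * α))
      (nhdsWithin 0 (Set.Ioi 0)) atTop := by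
  clear hh hmeas hnonneg hc hs₀
  obtain ⟨hα0, hα1⟩ := hα
  have heN1 : ‖eN‖ = 1 := by rw [heN]; simp [EuclideanSpace.norm_single]
  have hx0 : x ≠ 0 := by
    rintro rfl
    rw [mem_ball, dist_eq_norm, zero_sub, norm_neg, heN1] at hx
    exact lt_irrefl 1 hx
  set r : ℝ := ‖x‖ / 4 with hr_def
  have hr : 0 < r := by
    have := norm_pos_iff.mpr hx0
    positivity
  set S : Set (EuclideanSpace ℝ (Fin N)) :=
    Metric.ball eN 1 ∩ Metric.ball (0 : EuclideanSpace ℝ (Fin N)) r with hS_def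
  set p : ℝ := (N : ℝ) + 2 * α with hp_def
  have hp0 : 0 < p := by
    have : (0:ℝ) < N := by positivity
    simp only [hp_def]; linarith
  set f : ℝ → EuclideanSpace ℝ (Fin N) → ℝ :=
    fun s y => ρ y ^ α / ‖y + s • eN‖ ^ p with hf_def
  have hρnn : ∀ y, 0 ≤ ρ y := fun y => by rw [hρ]; exact infDist_nonneg
  have hρcont : Continuous ρ := by
    rw [show ρ = fun y => Metric.infDist y (Metric.sphere eN 1) from funext hρ]
    exact continuous_infDist_pt _
  have hfnn : ∀ s y, 0 ≤ f s y := fun s y =>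
    div_nonneg (rpow_nonneg (hρnn y) α) (rpow_nonneg (norm_nonneg _) p)
  -- denominator lower bound on the unit ball
  have hdenom : ∀ s : ℝ, 0 < s → ∀ y ∈ Metric.ball eN 1, s ≤ ‖y + s • eN‖ := by
    intro s hs y hy
    rw [mem_ball, dist_eq_norm] at hy
    have h1 : y + s • eN = (y - eN) + (1 + s) • eN := by
      rw [add_smul, one_smul]; abel
    have h2 : ‖(1 + s) • eN‖ ≤ ‖(y - eN) + (1 + s) • eN‖ + ‖y - eN‖ := by
      calc ‖(1 + s) • eN‖ = ‖((y - eN) + (1 + s) • eN) - (y - eN)‖ := by congr 1; abel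
      _ ≤ _ := norm_sub_le _ _
    have h3 : ‖(1 + s) • eN‖ = 1 + s := by
      rw [norm_smul, heN1, mul_one, Real.norm_eq_abs, abs_of_pos (by linarith)]
    rw [h1]
    linarith
  -- integrability on S, for each s > 0
  have hSmeas : MeasurableSet S := (measurableSet_ball).inter measurableSet_ball
  have hSfin : volume S < ⊤ :=
    lt_of_le_of_lt (measure_mono inter_subset_right) measure_ball_lt_top
  have hρle : ∀ y ∈ S, ρ y ≤ r + 2 := by
    intro y hy
    have hmem : eN + eN ∈ Metric.sphere eN 1 := by
      simp [mem_sphere, dist_eq_norm, heN1]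
    have h1 : ρ y ≤ dist y (eN + eN) := by rw [hρ]; exact infDist_le_dist_of_mem hmem
    have h2 : dist y (eN + eN) ≤ ‖y‖ + 2 := by
      rw [dist_eq_norm]
      calc ‖y - (eN + eN)‖ ≤ ‖y‖ + ‖eN + eN‖ := norm_sub_le _ _
      _ ≤ ‖y‖ + (‖eN‖ + ‖eN‖) := by linarith [norm_add_le eN eN]
      _ = ‖y‖ + 2 := by rw [heN1]; ring
    have h3 : ‖y‖ ≤ r := le_of_lt (by simpa [dist_eq_norm] using hy.2)
    linarith
  have hfmeas : ∀ s : ℝ, AEStronglyMeasurable (f s) volume := by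
    intro s
    apply Measurable.aestronglyMeasurable
    exact Measurable.div
      ((hρcont.rpow_const (fun y => Or.inr hα0.le)).measurable)
      (((continuous_id.add continuous_const).norm.rpow_const
        (fun y => Or.inr hp0.le)).measurable)
  have hInt : ∀ s : ℝ, 0 < s → IntegrableOn (f s) S := by
    intro s hs
    apply Measure.integrableOn_of_bounded hSfin.ne (hfmeas s)
    filter_upwards [ae_restrict_mem hSmeas] with y hy
    rw [Real.norm_eq_abs, abs_of_nonneg (hfnn s y)]
    have hd : s ^ p ≤ ‖y + s • eN‖ ^ p :=
      rpow_le_rpow hs.le (hdenom s hs y hy.1) hp0.le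
    have hn : ρ y ^ α ≤ (r + 2) ^ α := rpow_le_rpow (hρnn y) (hρle y hy) hα0.le
    exact div_le_div₀ (rpow_nonneg (by linarith) α) hn (rpow_pos_of_pos hs p) hd
  -- the cone shells
  set W : ℝ → Set (EuclideanSpace ℝ (Fin N)) := fun t =>
    {y | (3/4) * ‖y‖ < (inner ℝ y eN : ℝ)} ∩
      (Metric.ball (0 : EuclideanSpace ℝ (Fin N)) t \
        Metric.closedBall (0 : EuclideanSpace ℝ (Fin N)) (t/2)) with hW_def
  have hWsmul : ∀ t : ℝ, 0 < t → W t = t • W 1 := by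
    intro t ht
    ext y
    rw [Set.mem_smul_set_iff_inv_smul_mem₀ ht.ne']
    simp only [hW_def, Set.mem_inter_iff, Set.mem_setOf_eq, Set.mem_diff, mem_ball,
      mem_closedBall, dist_zero_right, norm_smul, Real.norm_eq_abs, abs_of_pos (inv_pos.mpr ht),
      real_inner_smul_left]
    have h1 : (3/4) * (t⁻¹ * ‖y‖) < t⁻¹ * (inner ℝ y eN : ℝ) ↔ (3/4) * ‖y‖ < (inner ℝ y eN : ℝ) := by
      rw [show (3/4) * (t⁻¹ * ‖y‖) = t⁻¹ * ((3/4) * ‖y‖) by ring]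
      exact mul_lt_mul_iff_right₀ (inv_pos.mpr ht)
    have h2 : t⁻¹ * ‖y‖ < 1 ↔ ‖y‖ < t := by
      rw [inv_mul_lt_iff₀ ht, mul_one]
    have h3 : t⁻¹ * ‖y‖ ≤ 1/2 ↔ ‖y‖ ≤ t/2 := by
      rw [inv_mul_le_iff₀ ht]; constructor <;> intro <;> linarith
    tauto
  have hconcont : Continuous fun y : EuclideanSpace ℝ (Fin N) => (inner ℝ y eN : ℝ) :=
    continuous_id.inner continuous_const
  have hWmeas : ∀ t, MeasurableSet (W t) := by
    intro t
    apply MeasurableSet.inter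
    · exact measurableSet_lt ((continuous_const.mul continuous_norm).measurable)
        hconcont.measurable
    · exact measurableSet_ball.diff measurableSet_closedBall
  have hW1open : IsOpen (W 1) := by
    apply IsOpen.inter
    · exact isOpen_lt (continuous_const.mul continuous_norm) hconcont
    · exact isOpen_ball.sdiff Metric.isClosed_closedBall
  have hW1ne : (W 1).Nonempty := by
    refine ⟨(3/4 : ℝ) • eN, ?_, ?_, ?_⟩
    · show (3/4:ℝ) * ‖(3/4:ℝ) • eN‖ < (inner ℝ ((3/4:ℝ) • eN) eN : ℝ)
      rw [real_inner_smul_left, real_inner_self_eq_norm_sq, norm_smul, heN1,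
        Real.norm_eq_abs, abs_of_nonneg (by norm_num : (0:ℝ) ≤ 3/4)]
      norm_num
    · rw [mem_ball, dist_zero_right, norm_smul, heN1, Real.norm_eq_abs,
        abs_of_nonneg (by norm_num : (0:ℝ) ≤ 3/4)]
      norm_num
    · rw [mem_closedBall, dist_zero_right, norm_smul, heN1, Real.norm_eq_abs,
        abs_of_nonneg (by norm_num : (0:ℝ) ≤ 3/4)]
      norm_num
  set m : ℝ := (volume (W 1)).toReal with hm_def
  have hW1fin : volume (W 1) < ⊤ := by
    apply lt_of_le_of_lt (measure_mono _)
      (measure_ball_lt_top (x := (0:EuclideanSpace ℝ (Fin N))) (r := 1))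
    exact fun y hy => hy.2.1
  have hm : 0 < m := by
    rw [hm_def, ENNReal.toReal_pos_iff]
    exact ⟨hW1open.measure_pos volume hW1ne, hW1fin⟩
  have hWvol : ∀ t : ℝ, 0 < t → (volume (W t)).toReal = t ^ N * m := by
    intro t ht
    rw [hWsmul t ht, Measure.addHaar_smul, finrank_euclideanSpace_fin,
      abs_of_pos (by positivity : (0:ℝ) < t ^ N), ENNReal.toReal_mul,
      ENNReal.toReal_ofReal (by positivity)]
  -- geometry: W t ⊆ S and lower bounds, for t small
  have hgeom : ∀ t : ℝ, 0 < t → t ≤ 1/2 → t ≤ r → ∀ y ∈ W t,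
      y ∈ S ∧ t/4 ≤ ρ y := by
    intro t ht ht2 htr y hy
    have hcone := hy.1
    have hylt := hy.2.1
    have hyge := hy.2.2
    rw [mem_ball, dist_zero_right] at hylt
    rw [mem_closedBall, dist_zero_right, not_le] at hyge
    have hy0 : 0 < ‖y‖ := lt_trans (by linarith) hyge
    have hyh : ‖y‖ ≤ 1/2 := le_trans hylt.le ht2
    have hcone' : (3/4) * ‖y‖ < (inner ℝ y eN : ℝ) := hcone
    have hb : ‖y - eN‖ ≤ 1 - ‖y‖/2 := cone_est eN y heN1 hcone' hyh
    have hball : y ∈ Metric.ball eN 1 := by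
      rw [mem_ball, dist_eq_norm]
      linarith
    have hρy : ‖y‖/2 ≤ ρ y := by
      rw [hρ]
      have hne : (Metric.sphere eN 1).Nonempty :=
        ⟨eN + eN, by simp [mem_sphere, dist_eq_norm, heN1]⟩
      rw [← not_lt, infDist_lt_iff hne]
      rintro ⟨z, hz, hdz⟩
      rw [mem_sphere] at hz
      have htri : dist eN z ≤ dist eN y + dist y z := dist_triangle _ _ _
      rw [dist_comm eN z, hz, dist_comm eN y, dist_eq_norm] at htri
      linarith
    refine ⟨⟨hball, ?_⟩, by linarith⟩
    rw [mem_ball, dist_zero_right]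
    linarith
  -- key lower bound on the integral
  set K : ℝ := (1/4 : ℝ) ^ α / (3/2 : ℝ) ^ p * m with hK_def
  have hK : 0 < K := by
    apply mul_pos _ hm
    exact div_pos (rpow_pos_of_pos (by norm_num) _) (rpow_pos_of_pos (by norm_num) _)
  have hlow : ∀ t : ℝ, 0 < t → t ≤ 1/2 → t ≤ r → ∀ s : ℝ, 0 < s → s ≤ t/2 →
      K * t ^ (-α) ≤ ∫ y in S, f s y := by
    intro t ht ht2 htr s hs hst
    have hWS : W t ⊆ S := fun y hy => (hgeom t ht ht2 htr y hy).1
    have hconstle : ∀ y ∈ W t, (t/4) ^ α / ((3/2) * t) ^ p ≤ f s y := by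
      intro y hy
      obtain ⟨hyS, hρy⟩ := hgeom t ht ht2 htr y hy
      have hynorm : ‖y‖ < t := by
        have := hy.2.1; rwa [mem_ball, dist_zero_right] at this
      have hd1 : ‖y + s • eN‖ ≤ (3/2) * t := by
        calc ‖y + s • eN‖ ≤ ‖y‖ + ‖s • eN‖ := norm_add_le _ _
        _ = ‖y‖ + s := by rw [norm_smul, heN1, mul_one, Real.norm_eq_abs, abs_of_pos hs]
        _ ≤ (3/2) * t := by linarith
      have hdp : ‖y + s • eN‖ ^ p ≤ ((3/2) * t) ^ p :=
        rpow_le_rpow (norm_nonneg _) hd1 hp0.le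
      have hdpos : 0 < ‖y + s • eN‖ ^ p :=
        rpow_pos_of_pos (lt_of_lt_of_le hs (hdenom s hs y hyS.1)) p
      have hnum : (t/4) ^ α ≤ ρ y ^ α := rpow_le_rpow (by positivity) hρy hα0.le
      exact div_le_div₀ (rpow_nonneg (hρnn y) α) hnum hdpos hdp
    have h1 : (t/4) ^ α / ((3/2) * t) ^ p * (volume (W t)).toReal ≤ ∫ y in W t, f s y := by
      refine Eq.trans_le ?_ (setIntegral_ge_of_const_le (μ := volume)
        (c := (t/4) ^ α / ((3/2) * t) ^ p) (hWmeas t) ?_ ?_ ?_)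
      · rw [smul_eq_mul, mul_comm]; rfl
      · exact ((measure_mono hWS).trans_lt hSfin).ne
      · exact hconstle
      · exact (hInt s hs).mono_set hWS
    have h2 : ∫ y in W t, f s y ≤ ∫ y in S, f s y := by
      apply setIntegral_mono_set (hInt s hs)
      · filter_upwards with y using hfnn s y
      · exact HasSubset.Subset.eventuallyLE hWS
    refine le_trans (le_of_eq ?_) (le_trans h1 h2)
    rw [hWvol t ht]
    have e1 : (t/4 : ℝ) ^ α = (1/4 : ℝ) ^ α * t ^ α := by
      rw [show (t/4 : ℝ) = (1/4) * t by ring, Real.mul_rpow (by norm_num) ht.le]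
    have e2 : ((3/2 : ℝ) * t) ^ p = (3/2 : ℝ) ^ p * t ^ p := Real.mul_rpow (by norm_num) ht.le
    have e3 : (t : ℝ) ^ N = t ^ (N : ℝ) := (Real.rpow_natCast t N).symm
    have e5 : t ^ α * t ^ (N:ℝ) / t ^ p = t ^ (-α) := by
      rw [← Real.rpow_add ht, ← Real.rpow_sub ht]
      congr 1
      simp only [hp_def]; ring
    have hB : ((3/2:ℝ) ^ p) ≠ 0 := (rpow_pos_of_pos (by norm_num) p).ne'
    have htp : (t ^ p) ≠ 0 := (rpow_pos_of_pos ht p).ne'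
    rw [e1, e2, e3, hK_def, ← e5]
    field_simp
  -- conclude
  rw [Filter.tendsto_atTop]
  intro M
  have htend : Tendsto (fun t : ℝ => K * t ^ (-α)) (nhdsWithin 0 (Set.Ioi 0)) atTop := by
    have h1 : Tendsto (fun t : ℝ => (t⁻¹) ^ α) (nhdsWithin 0 (Set.Ioi 0)) atTop :=
      (tendsto_rpow_atTop hα0).comp tendsto_inv_nhdsGT_zero
    have h2 : Tendsto (fun t : ℝ => t ^ (-α)) (nhdsWithin 0 (Set.Ioi 0)) atTop := by
      apply h1.congr'
      filter_upwards [self_mem_nhdsWithin] with t (ht : t ∈ Set.Ioi (0:ℝ))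
      rw [Real.inv_rpow (le_of_lt ht), ← Real.rpow_neg (le_of_lt ht)]
    exact h2.const_mul_atTop hK
  have hev : ∀ᶠ t : ℝ in nhdsWithin 0 (Set.Ioi 0),
      0 < t ∧ t ≤ 1/2 ∧ t ≤ r ∧ M ≤ K * t ^ (-α) := by
    have e1 : Set.Ioo (0:ℝ) (min (1/2) r) ∈ nhdsWithin (0:ℝ) (Set.Ioi 0) :=
      Ioo_mem_nhdsGT_of_mem (Set.mem_Ico.mpr ⟨le_refl 0, lt_min (by norm_num) hr⟩)
    filter_upwards [e1, htend.eventually_ge_atTop M] with t ht1 ht2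
    exact ⟨ht1.1, le_of_lt (lt_of_lt_of_le ht1.2 (min_le_left _ _)),
      le_of_lt (lt_of_lt_of_le ht1.2 (min_le_right _ _)), ht2⟩
  obtain ⟨t, ht, ht2, htr, htM⟩ := hev.exists
  have hIoo : Set.Ioo (0:ℝ) (t/2) ∈ nhdsWithin (0:ℝ) (Set.Ioi 0) :=
    Ioo_mem_nhdsGT_of_mem (Set.mem_Ico.mpr ⟨le_refl (0:ℝ), by linarith⟩)
  filter_upwards [hIoo] with s hs
  exact le_trans htM (hlow t ht ht2 htr s hs.1 hs.2.le)
end
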